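/- For every permutation π of {1,...,n}, dexc(π) ≤ n²/4. Moreover, for every integer k with 0 ≤ k ≤ n²/4 there exists a permutation π of {1,...,n} with dexc(π) = k. -/

import Mathlib

open Finset

def exc {n : ℕ} (π : Equiv.Perm (Fin n)) : ℕ :=
  (univ.filter (fun i => i < π i)).card

def dexc {n : ℕ} (π : Equiv.Perm (Fin n)) : ℕ :=
  ∑ i ∈ univ.filter (fun i => i < π i), ((π i : ℕ) - (i : ℕ))

def inv {n : ℕ} (π : Equiv.Perm (Fin n)) : ℕ :=
  (univ.filter (fun p : Fin n × Fin n => p.1 < p.2 ∧ π p.2 < π p.1)).card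




theorem gauss_le_aux : ∀ (m : ℕ) (s : Finset ℕ), s.card = m →
    ∑ i ∈ range m, (i:ℤ) ≤ ∑ x ∈ s, (x:ℤ) := by
  intro m
  induction m with
  | zero => simp
  | succ m ih =>
    intro s hn
    have hne : s.Nonempty := by rw [← Finset.card_pos, hn]; omega
    set M := s.max' hne with hM
    have hMs : M ∈ s := s.max'_mem hne
    have hcard : (s.erase M).card = m := by rw [Finset.card_erase_of_mem hMs, hn]; omega
    have hle : (m:ℤ) ≤ M := by
      have hsub : s ⊆ range (M+1) := fun x hx => by
        simp only [mem_range]; exact Nat.lt_succ_of_le (s.le_max' x hx)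
      have h2 := Finset.card_le_card hsub
      rw [hn, card_range] at h2
      exact_mod_cast by omega
    have h3 := ih (s.erase M) hcard
    rw [Finset.sum_range_succ]
    have h4 : ∑ x ∈ s, (x:ℤ) = (∑ x ∈ s.erase M, (x:ℤ)) + M := by
      rw [Finset.sum_erase_add s _ hMs]
    omega

theorem gauss_le (s : Finset ℕ) : ∑ i ∈ range s.card, (i:ℤ) ≤ ∑ x ∈ s, (x:ℤ) :=
  gauss_le_aux s.card s rfl


theorem dexc_eq_sum {n : ℕ} (π : Equiv.Perm (Fin n)) :
    dexc π = ∑ i : Fin n, ((π i : ℕ) - (i : ℕ)) := by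
  rw [dexc]
  apply Finset.sum_filter_of_ne
  intro i _ h
  rw [Fin.lt_iff_val_lt_val]
  omega

theorem dexc_one {n : ℕ} : dexc (1 : Equiv.Perm (Fin n)) = 0 := by
  rw [dexc_eq_sum]; simp

theorem dexc_swap {n : ℕ} (a b : Fin n) (h : a ≤ b) :
    dexc (Equiv.swap a b) = (b : ℕ) - (a : ℕ) := by
  rw [dexc_eq_sum]
  rw [Finset.sum_eq_single_of_mem a (mem_univ a)]
  · rw [Equiv.swap_apply_left]
  · intro j _ hj
    rcases eq_or_ne j b with rfl | hb
    · rw [Equiv.swap_apply_right]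
      have : (a:ℕ) ≤ j := h
      omega
    · rw [Equiv.swap_apply_of_ne_of_ne hj hb]
      omega

theorem gauss_ub (n : ℕ) (s : Finset ℕ) (hs : ∀ x ∈ s, x < n) :
    ∑ x ∈ s, (x:ℤ) ≤ (s.card : ℤ) * n - s.card - ∑ i ∈ range s.card, (i:ℤ) := by
  set t := s.image (fun x => n - 1 - x) with ht
  have hinj : Set.InjOn (fun x => n - 1 - x) s := by
    intro x hx y hy hxy
    have := hs x hx; have := hs y hy
    simp only at hxy; omega
  have hcard : t.card = s.card := Finset.card_image_of_injOn hinj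
  have hsum : ∑ y ∈ t, (y:ℤ) = ∑ x ∈ s, ((n:ℤ) - 1 - x) := by
    rw [ht, Finset.sum_image hinj]
    apply Finset.sum_congr rfl
    intro x hx
    have := hs x hx
    push_cast [Nat.cast_sub (by omega : x ≤ n - 1), Nat.cast_sub (by omega : 1 ≤ n)]
    ring
  have hg := gauss_le t
  rw [hcard, hsum, Finset.sum_sub_distrib, Finset.sum_const, nsmul_eq_mul] at hg
  linarith

theorem dexc_upper {n : ℕ} (π : Equiv.Perm (Fin n)) : 4 * dexc π ≤ n ^ 2 := by
  classical
  set E := univ.filter (fun i : Fin n => i < π i) with hE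
  set e := E.card with he
  have he_le : e ≤ n := by
    have := Finset.card_filter_le (univ : Finset (Fin n)) (fun i => i < π i)
    simpa [he, hE] using this
  have hcast : (dexc π : ℤ) = ∑ i ∈ E, ((π i : ℤ) - (i : ℤ)) := by
    rw [dexc, Nat.cast_sum]
    apply Finset.sum_congr rfl
    intro i hi
    rw [Finset.mem_filter] at hi
    have : (i:ℕ) ≤ (π i : ℕ) := le_of_lt hi.2
    push_cast [Nat.cast_sub this]
    ring
  -- image finsets
  set A := E.image (fun i : Fin n => (i : ℕ)) with hA
  set B := E.image (fun i : Fin n => (π i : ℕ)) with hB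
  have hAinj : Set.InjOn (fun i : Fin n => (i : ℕ)) E := fun x _ y _ h => Fin.ext h
  have hBinj : Set.InjOn (fun i : Fin n => (π i : ℕ)) E :=
    fun x _ y _ h => π.injective (Fin.ext h)
  have hAcard : A.card = e := Finset.card_image_of_injOn hAinj
  have hBcard : B.card = e := Finset.card_image_of_injOn hBinj
  have hAsum : ∑ x ∈ A, (x:ℤ) = ∑ i ∈ E, (i:ℤ) := by
    rw [hA, Finset.sum_image hAinj]
  have hBsum : ∑ x ∈ B, (x:ℤ) = ∑ i ∈ E, ((π i : ℕ):ℤ) := by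
    rw [hB, Finset.sum_image hBinj]
  have hGA := gauss_le A
  rw [hAcard, hAsum] at hGA
  have hGB := gauss_ub n B (by
    intro x hx
    rw [hB, Finset.mem_image] at hx
    obtain ⟨i, _, rfl⟩ := hx
    exact (π i).isLt)
  rw [hBcard, hBsum] at hGB
  set G : ℤ := ∑ i ∈ range e, (i:ℤ) with hG
  have h2G : 2 * G = (e:ℤ) * e - e := by
    have h1 : ((∑ i ∈ range e, i : ℕ) : ℤ) = G := by rw [hG]; push_cast; rfl
    have h2 := Finset.sum_range_id_mul_two e
    rcases Nat.eq_zero_or_pos e with hz | hpos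
    · have hg0 : G = 0 := by rw [hG, hz]; simp
      rw [hg0, hz]; simp
    · have : ((e * (e-1) : ℕ) : ℤ) = (e:ℤ) * e - e := by
        push_cast [Nat.cast_sub hpos]; ring
      omega
  have hval : (dexc π : ℤ) = ∑ i ∈ E, ((π i:ℕ):ℤ) - ∑ i ∈ E, (i:ℤ) := by
    rw [hcast, Finset.sum_sub_distrib]
  have key : 4 * (dexc π : ℤ) ≤ (n:ℤ)^2 := by
    have hen : (e:ℤ) ≤ n := by exact_mod_cast he_le
    nlinarith [sq_nonneg ((n:ℤ) - 2*e)]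
  exact_mod_cast key

def midFun (m : ℕ) (p : Fin m → Fin m) : Fin (m+2) → Fin (m+2) := fun j =>
  if h0 : (j:ℕ) = 0 then ⟨m+1, by omega⟩
  else if h1 : (j:ℕ) = m+1 then ⟨0, by omega⟩
  else ⟨(p ⟨(j:ℕ)-1, by have := j.isLt; omega⟩ : ℕ) + 1, by
    have := (p ⟨(j:ℕ)-1, by have := j.isLt; omega⟩).isLt; omega⟩

theorem midFun_zero (m : ℕ) (p : Fin m → Fin m) (h : 0 < m+2) :
    midFun m p ⟨0, h⟩ = ⟨m+1, by omega⟩ := by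
  unfold midFun; exact dif_pos rfl

theorem midFun_top (m : ℕ) (p : Fin m → Fin m) (h : m+1 < m+2) :
    midFun m p ⟨m+1, h⟩ = ⟨0, by omega⟩ := by
  unfold midFun
  rw [dif_neg (by simp : ¬ ((⟨m+1, h⟩ : Fin (m+2)) : ℕ) = 0)]
  exact dif_pos rfl

theorem midFun_mid (m : ℕ) (p : Fin m → Fin m) (v : ℕ) (h : v < m+2)
    (h0 : v ≠ 0) (h1 : v ≠ m+1) :
    midFun m p ⟨v, h⟩ = ⟨(p ⟨v-1, by omega⟩ : ℕ) + 1, by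
      have := (p ⟨v-1, by omega⟩).isLt; omega⟩ := by
  unfold midFun
  rw [dif_neg (by simpa using h0 : ¬ ((⟨v, h⟩ : Fin (m+2)) : ℕ) = 0),
    dif_neg (by simpa using h1 : ¬ ((⟨v, h⟩ : Fin (m+2)) : ℕ) = m+1)]

theorem midFun_comp (m : ℕ) (p q : Fin m → Fin m) (h : ∀ x, q (p x) = x) :
    ∀ j, midFun m q (midFun m p j) = j := by
  intro j
  rcases j with ⟨jv, hj⟩
  by_cases h0 : jv = 0
  · subst h0
    rw [midFun_zero, midFun_top]
  · by_cases h1 : jv = m + 1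
    · subst h1
      rw [midFun_top, midFun_zero]
    · rw [midFun_mid m p jv hj h0 h1]
      have hlt := (p ⟨jv-1, by omega⟩).isLt
      rw [midFun_mid m q _ _ (by omega) (by omega)]
      have e1 : (⟨(p ⟨jv-1, by omega⟩ : ℕ) + 1 - 1, by omega⟩ : Fin m)
          = p ⟨jv-1, by omega⟩ := by apply Fin.ext; simp
      simp only [e1, h]
      apply Fin.ext
      simp only
      omega

def midPerm (m : ℕ) (π' : Equiv.Perm (Fin m)) : Equiv.Perm (Fin (m+2)) where
  toFun := midFun m π'
  invFun := midFun m π'.symm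
  left_inv := midFun_comp m π' π'.symm (fun x => π'.symm_apply_apply x)
  right_inv := midFun_comp m π'.symm π' (fun x => π'.apply_symm_apply x)

theorem midPerm_apply (m : ℕ) (π' : Equiv.Perm (Fin m)) (j : Fin (m+2)) :
    midPerm m π' j = midFun m π' j := rfl

theorem dexc_midPerm (m : ℕ) (π' : Equiv.Perm (Fin m)) :
    dexc (midPerm m π') = (m + 1) + dexc π' := by
  rw [dexc_eq_sum, dexc_eq_sum]
  rw [Fin.sum_univ_succ, Fin.sum_univ_castSucc]
  have h0 : ((midPerm m π' 0 : Fin (m+2)) : ℕ) - ((0 : Fin (m+2)) : ℕ) = m + 1 := by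
    rw [midPerm_apply]
    have e : (0 : Fin (m+2)) = ⟨0, by omega⟩ := rfl
    rw [e, midFun_zero]
    simp
  have hlast : ((midPerm m π' ((Fin.last m).succ) : Fin (m+2)) : ℕ)
      - (((Fin.last m).succ : Fin (m+2)) : ℕ) = 0 := by
    rw [midPerm_apply]
    have e : ((Fin.last m).succ : Fin (m+2)) = ⟨m+1, by omega⟩ := by
      apply Fin.ext; simp [Fin.val_succ, Fin.last]
    rw [e, midFun_top]
    simp
  have hmid : ∀ i : Fin m,
      ((midPerm m π' ((i.castSucc : Fin (m+1)).succ) : Fin (m+2)) : ℕ)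
        - (((i.castSucc : Fin (m+1)).succ : Fin (m+2)) : ℕ)
      = (π' i : ℕ) - (i : ℕ) := by
    intro i
    rw [midPerm_apply]
    have hi := i.isLt
    have e : ((i.castSucc : Fin (m+1)).succ : Fin (m+2)) = ⟨(i:ℕ)+1, by omega⟩ := by
      apply Fin.ext; simp
    rw [e, midFun_mid m π' ((i:ℕ)+1) (by omega) (by omega) (by omega)]
    have e1 : (⟨(i:ℕ)+1-1, by omega⟩ : Fin m) = i := by apply Fin.ext; simp
    simp only [e1, Fin.val_mk]
    omega
  rw [h0, hlast]
  rw [Finset.sum_congr rfl (fun i _ => hmid i)]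
  omega

theorem exists_dexc : ∀ n k : ℕ, 4 * k ≤ n ^ 2 → ∃ π : Equiv.Perm (Fin n), dexc π = k := by
  intro n
  induction n using Nat.strong_induction_on with
  | _ n ih =>
    match n with
    | 0 => exact fun k hk => ⟨1, by rw [dexc_one]; omega⟩
    | 1 => exact fun k hk => ⟨1, by rw [dexc_one]; omega⟩
    | (m+2) =>
      intro k hk
      by_cases hkle : k ≤ m + 1
      · refine ⟨Equiv.swap ⟨0, by omega⟩ ⟨k, by omega⟩, ?_⟩
        rw [dexc_swap _ _ (by simp : (⟨0, by omega⟩ : Fin (m+2)) ≤ ⟨k, by omega⟩)]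
        simp
      · have h4 : 4 * (k - (m+1)) ≤ m ^ 2 := by
          have he : (m+2)^2 = m^2 + 4*m + 4 := by ring
          omega
        obtain ⟨π', hπ'⟩ := ih m (by omega) (k - (m+1)) h4
        exact ⟨midPerm m π', by rw [dexc_midPerm, hπ']; omega⟩


theorem dexc_le_and_surjective (n : ℕ) :
    (∀ π : Equiv.Perm (Fin n), 4 * dexc π ≤ n ^ 2) ∧
    (∀ k : ℕ, 4 * k ≤ n ^ 2 → ∃ π : Equiv.Perm (Fin n), dexc π = k) := by
  exact ⟨fun π => dexc_upper π, fun k hk => exists_dexc n k hk⟩
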